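/- arXiv:2005.12415 — 3 statements merged into one kernel-verified Lean document; each statement's English description precedes it below -/
import Mathlib

section
/- Let A be a real n₁ × n₂ matrix of rank r with reduced SVD A = U Σ Vᵀ, and let P_T(B) = U Uᵀ B + B V Vᵀ − U Uᵀ B V Vᵀ. Then for any real n₁ × n₂ matrix B, rank(P_T(B)) ≤ 2·rank(A). -/
open Matrix

noncomputable def singVals {m n : ℕ} (A : Matrix (Fin m) (Fin n) ℝ) : Fin n → ℝ :=
  fun i => Real.sqrt ((Matrix.isHermitian_conjTranspose_mul_self A).eigenvalues i)

noncomputable def nuclearNorm {m n : ℕ} (A : Matrix (Fin m) (Fin n) ℝ) : ℝ :=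
  ∑ i, singVals A i

noncomputable def frobNorm {m n : ℕ} (A : Matrix (Fin m) (Fin n) ℝ) : ℝ :=
  Real.sqrt (∑ i, ∑ j, (A i j) ^ 2)


/-- Projection onto the tangent space of the set of low-rank matrices at a
matrix with reduced SVD given by column-orthonormal `U` and `V`. -/
def PT {n₁ n₂ r : ℕ} (U : Matrix (Fin n₁) (Fin r) ℝ) (V : Matrix (Fin n₂) (Fin r) ℝ)
    (B : Matrix (Fin n₁) (Fin n₂) ℝ) : Matrix (Fin n₁) (Fin n₂) ℝ :=
  U * Uᵀ * B + B * (V * Vᵀ) - U * Uᵀ * B * (V * Vᵀ)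

lemma rank_add_le' {m n : ℕ} (X Y : Matrix (Fin m) (Fin n) ℝ) :
    (X + Y).rank ≤ X.rank + Y.rank := by
  simp only [Matrix.rank]
  have h : LinearMap.range (X + Y).mulVecLin ≤
      LinearMap.range X.mulVecLin ⊔ LinearMap.range Y.mulVecLin := by
    rintro x ⟨v, rfl⟩
    exact Submodule.mem_sup.2 ⟨X.mulVecLin v, ⟨v, rfl⟩, Y.mulVecLin v, ⟨v, rfl⟩, by
      simp [Matrix.add_mulVec]⟩
  exact (Submodule.finrank_mono h).trans
    (Submodule.finrank_add_le_finrank_add_finrank _ _)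

/-- `rank (P_T B) ≤ 2 rank A`. -/
theorem stmt12 {n₁ n₂ r : ℕ} (A : Matrix (Fin n₁) (Fin n₂) ℝ)
    (U : Matrix (Fin n₁) (Fin r) ℝ) (V : Matrix (Fin n₂) (Fin r) ℝ)
    (σ : Fin r → ℝ) (hσ : ∀ i, 0 < σ i)
    (hU : Uᵀ * U = 1) (hV : Vᵀ * V = 1)
    (hA : A = U * Matrix.diagonal σ * Vᵀ) (hrank : A.rank = r)
    (B : Matrix (Fin n₁) (Fin n₂) ℝ) :
    (PT U V B).rank ≤ 2 * A.rank := by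
  have hPT : PT U V B = U * (Uᵀ * B) + ((B - U * Uᵀ * B) * V) * Vᵀ := by
    unfold PT
    rw [Matrix.sub_mul, Matrix.sub_mul]
    noncomm_ring
    simp [Matrix.mul_assoc]
  rw [hPT, hrank, two_mul]
  refine (rank_add_le' _ _).trans (add_le_add ?_ ?_)
  · exact (Matrix.rank_mul_le_left _ _).trans (Matrix.rank_le_width U)
  · exact (Matrix.rank_mul_le_right _ _).trans (Matrix.rank_le_height Vᵀ)
end

section
/- Let A be a real n₁ × n₂ matrix of rank r with reduced SVD A = U Σ Vᵀ, and let P_T(B) = U Uᵀ B + B V Vᵀ − U Uᵀ B V Vᵀ. Then for any real n₁ × n₂ matrix B, the nuclear norm satisfies ‖P_T(B)‖_* ≤ √(2·rank(A)) · ‖B‖_F. -/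
open Matrix

lemma trace_eq_sum_eigenvalues {n : ℕ} {M : Matrix (Fin n) (Fin n) ℝ} (hM : M.IsHermitian) :
    M.trace = ∑ i, hM.eigenvalues i := by
  conv_lhs => rw [hM.spectral_theorem, Unitary.conjStarAlgAut_apply]
  rw [Matrix.trace_mul_cycle,
    Unitary.coe_star_mul_self hM.eigenvectorUnitary, Matrix.one_mul, Matrix.trace_diagonal]
  simp

lemma trace_conjTranspose_mul_self {m n : ℕ} (M : Matrix (Fin m) (Fin n) ℝ) :
    (Mᴴ * M).trace = ∑ i, ∑ j, M i j ^ 2 := by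
  rw [Finset.sum_comm]
  simp [Matrix.trace, Matrix.mul_apply, Matrix.diag, Matrix.conjTranspose_apply, sq]

lemma nuclear_le_sqrt_rank_mul_frob {m n : ℕ} (X : Matrix (Fin m) (Fin n) ℝ) :
    nuclearNorm X ≤ Real.sqrt X.rank * frobNorm X := by
  classical
  have hM := Matrix.isHermitian_conjTranspose_mul_self X
  set lam : Fin n → ℝ := hM.eigenvalues with hlam
  have hnn : ∀ i, 0 ≤ lam i := Matrix.eigenvalues_conjTranspose_mul_self_nonneg X
  have hsum : ∑ i, lam i = ∑ i, ∑ j, X i j ^ 2 := by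
    rw [← trace_conjTranspose_mul_self, trace_eq_sum_eigenvalues hM]
  set s : Finset (Fin n) := Finset.univ.filter (fun i => lam i ≠ 0) with hs
  have hcard : (s.card : ℕ) = X.rank := by
    have h1 : (Xᴴ * X).rank = X.rank := by
      rw [show Xᴴ = Xᵀ from Matrix.conjTranspose_eq_transpose_of_trivial X,
        Matrix.rank_transpose_mul_self]
    rw [← h1, hM.rank_eq_card_non_zero_eigs, Fintype.card_subtype]
  have hsing : ∀ i, singVals X i = Real.sqrt (lam i) := fun i => rfl
  have hnuc : nuclearNorm X = ∑ i ∈ s, Real.sqrt (lam i) := by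
    rw [nuclearNorm]
    simp_rw [hsing]
    refine (Finset.sum_subset (Finset.subset_univ s) fun i _ hi => ?_).symm
    have : lam i = 0 := by
      by_contra h
      exact hi (by simp [hs, h])
    rw [this, Real.sqrt_zero]
  have key : (∑ i ∈ s, Real.sqrt (lam i)) ^ 2 ≤ (s.card : ℝ) * ∑ i ∈ s, lam i := by
    have := sq_sum_le_card_mul_sum_sq (s := s) (f := fun i => Real.sqrt (lam i))
    calc (∑ i ∈ s, Real.sqrt (lam i)) ^ 2 ≤ (s.card : ℝ) * ∑ i ∈ s, Real.sqrt (lam i) ^ 2 := this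
      _ = (s.card : ℝ) * ∑ i ∈ s, lam i := by
          congr 1; exact Finset.sum_congr rfl fun i _ => Real.sq_sqrt (hnn i)
  have hsub : ∑ i ∈ s, lam i ≤ ∑ i, lam i :=
    Finset.sum_le_sum_of_subset_of_nonneg (Finset.subset_univ s) fun i _ _ => hnn i
  have hfrob : frobNorm X = Real.sqrt (∑ i, lam i) := by rw [frobNorm, hsum]
  have hnonneg : 0 ≤ ∑ i ∈ s, Real.sqrt (lam i) :=
    Finset.sum_nonneg fun i _ => Real.sqrt_nonneg _
  rw [hnuc, hfrob, ← Real.sqrt_sq hnonneg, ← Real.sqrt_mul (by positivity)]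
  apply Real.sqrt_le_sqrt
  calc (∑ i ∈ s, Real.sqrt (lam i)) ^ 2 ≤ (s.card : ℝ) * ∑ i ∈ s, lam i := key
    _ ≤ (X.rank : ℝ) * ∑ i, lam i := by
        apply mul_le_mul
        · exact_mod_cast hcard.le
        · exact hsub
        · exact Finset.sum_nonneg fun i _ => hnn i
        · positivity

lemma trace_transpose_mul_self' {m n : ℕ} (M : Matrix (Fin m) (Fin n) ℝ) :
    (Mᵀ * M).trace = ∑ i, ∑ j, M i j ^ 2 := by
  rw [Finset.sum_comm]
  simp [Matrix.trace, Matrix.mul_apply, Matrix.diag, Matrix.transpose_apply, sq]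

lemma frob_PT_le {n₁ n₂ r : ℕ} (U : Matrix (Fin n₁) (Fin r) ℝ) (V : Matrix (Fin n₂) (Fin r) ℝ)
    (hU : Uᵀ * U = 1) (hV : Vᵀ * V = 1) (B : Matrix (Fin n₁) (Fin n₂) ℝ) :
    frobNorm (PT U V B) ≤ frobNorm B := by
  set P : Matrix (Fin n₁) (Fin n₁) ℝ := U * Uᵀ with hPdef
  set Q : Matrix (Fin n₂) (Fin n₂) ℝ := V * Vᵀ with hQdef
  have hP : P * P = P := by
    rw [hPdef, show U * Uᵀ * (U * Uᵀ) = U * (Uᵀ * U) * Uᵀ by simp [Matrix.mul_assoc], hU,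
      Matrix.mul_one]
  have hQ : Q * Q = Q := by
    rw [hQdef, show V * Vᵀ * (V * Vᵀ) = V * (Vᵀ * V) * Vᵀ by simp [Matrix.mul_assoc], hV,
      Matrix.mul_one]
  have hPt : Pᵀ = P := by rw [hPdef, Matrix.transpose_mul, Matrix.transpose_transpose]
  have hQt : Qᵀ = Q := by rw [hQdef, Matrix.transpose_mul, Matrix.transpose_transpose]
  set X : Matrix (Fin n₁) (Fin n₂) ℝ := PT U V B with hXdef
  set Y : Matrix (Fin n₁) (Fin n₂) ℝ := B - X with hYdef
  have hXeq : X = P * B + B * Q - P * B * Q := rfl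
  have hY : Y = (1 - P) * B * (1 - Q) := by
    rw [hYdef, hXeq]
    simp only [Matrix.sub_mul, Matrix.mul_sub, Matrix.one_mul, Matrix.mul_one]
    abel
  have hPO : P * (1 - P) = 0 := by rw [Matrix.mul_sub, Matrix.mul_one, hP, sub_self]
  have hQO : (1 - Q) * Q = 0 := by rw [Matrix.sub_mul, Matrix.one_mul, hQ, sub_self]
  have hXt : Xᵀ = Bᵀ * P + Q * Bᵀ - Q * (Bᵀ * P) := by
    rw [hXeq]
    simp only [Matrix.transpose_sub, Matrix.transpose_add, Matrix.transpose_mul,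
      Matrix.transpose_transpose, ← hPdef, ← hQdef, Matrix.mul_assoc]
    rw [hPt, hQt]
  have t1 : (Bᵀ * P * ((1 - P) * B * (1 - Q))).trace = 0 := by
    rw [show Bᵀ * P * ((1 - P) * B * (1 - Q)) = Bᵀ * (P * (1 - P)) * (B * (1 - Q)) by
      simp [Matrix.mul_assoc], hPO, Matrix.mul_zero, Matrix.zero_mul, Matrix.trace_zero]
  have t2 : (Q * Bᵀ * ((1 - P) * B * (1 - Q))).trace = 0 := by
    rw [show Q * Bᵀ * ((1 - P) * B * (1 - Q)) = Q * (Bᵀ * ((1 - P) * B)) * (1 - Q) by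
      simp [Matrix.mul_assoc], Matrix.trace_mul_comm,
      show (1 - Q) * (Q * (Bᵀ * ((1 - P) * B))) = ((1 - Q) * Q) * (Bᵀ * ((1 - P) * B)) by
      simp [Matrix.mul_assoc], hQO, Matrix.zero_mul, Matrix.trace_zero]
  have t3 : (Q * (Bᵀ * P) * ((1 - P) * B * (1 - Q))).trace = 0 := by
    rw [show Q * (Bᵀ * P) * ((1 - P) * B * (1 - Q))
        = Q * Bᵀ * (P * (1 - P)) * (B * (1 - Q)) by simp [Matrix.mul_assoc], hPO,
      Matrix.mul_zero, Matrix.zero_mul, Matrix.trace_zero]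
  have h0 : (Xᵀ * Y).trace = 0 := by
    rw [hY, hXt, Matrix.sub_mul, Matrix.add_mul, Matrix.trace_sub, Matrix.trace_add, t1, t2, t3]
    ring
  have h0' : (Yᵀ * X).trace = 0 := by
    rw [show Yᵀ * X = (Xᵀ * Y)ᵀ by rw [Matrix.transpose_mul, Matrix.transpose_transpose],
      Matrix.trace_transpose, h0]
  have hBXY : B = X + Y := by rw [hYdef]; abel
  have hexp : (Bᵀ * B).trace = (Xᵀ * X).trace + (Yᵀ * Y).trace := by
    conv_lhs => rw [hBXY]
    rw [Matrix.transpose_add, Matrix.add_mul, Matrix.mul_add, Matrix.mul_add,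
      Matrix.trace_add, Matrix.trace_add, Matrix.trace_add, h0, h0']
    ring
  have hYnn : 0 ≤ (Yᵀ * Y).trace := by
    rw [trace_transpose_mul_self']
    positivity
  have hle : ∑ i, ∑ j, X i j ^ 2 ≤ ∑ i, ∑ j, B i j ^ 2 := by
    rw [← trace_transpose_mul_self', ← trace_transpose_mul_self', hexp]
    linarith
  exact Real.sqrt_le_sqrt hle

lemma rank_PT_le {n₁ n₂ r : ℕ} (U : Matrix (Fin n₁) (Fin r) ℝ) (V : Matrix (Fin n₂) (Fin r) ℝ)
    (B : Matrix (Fin n₁) (Fin n₂) ℝ) : (PT U V B).rank ≤ r + r := by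
  have hdecomp : PT U V B
      = Matrix.fromCols U ((B - U * Uᵀ * B) * V) * Matrix.fromRows (Uᵀ * B) Vᵀ := by
    rw [Matrix.fromCols_mul_fromRows]
    rw [PT, Matrix.sub_mul, Matrix.sub_mul]
    simp only [Matrix.mul_assoc]
    abel
  rw [hdecomp]
  calc (Matrix.fromCols U ((B - U * Uᵀ * B) * V) * Matrix.fromRows (Uᵀ * B) Vᵀ).rank
      ≤ (Matrix.fromCols U ((B - U * Uᵀ * B) * V)).rank := Matrix.rank_mul_le_left _ _
    _ ≤ Fintype.card (Fin r ⊕ Fin r) := Matrix.rank_le_card_width _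
    _ = r + r := by simp

/-- `‖P_T B‖_* ≤ √(2 rank A) ‖B‖_F`. -/
theorem stmt13 {n₁ n₂ r : ℕ} (A : Matrix (Fin n₁) (Fin n₂) ℝ)
    (U : Matrix (Fin n₁) (Fin r) ℝ) (V : Matrix (Fin n₂) (Fin r) ℝ)
    (σ : Fin r → ℝ) (hσ : ∀ i, 0 < σ i)
    (hU : Uᵀ * U = 1) (hV : Vᵀ * V = 1)
    (hA : A = U * Matrix.diagonal σ * Vᵀ) (hrank : A.rank = r)
    (B : Matrix (Fin n₁) (Fin n₂) ℝ) :
    nuclearNorm (PT U V B) ≤ Real.sqrt (2 * A.rank) * frobNorm B := by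
  rw [hrank]
  calc nuclearNorm (PT U V B)
      ≤ Real.sqrt ((PT U V B).rank) * frobNorm (PT U V B) :=
        nuclear_le_sqrt_rank_mul_frob _
    _ ≤ Real.sqrt (2 * r) * frobNorm B := by
        apply mul_le_mul
        · apply Real.sqrt_le_sqrt
          have := rank_PT_le U V B
          push_cast
          calc ((PT U V B).rank : ℝ) ≤ (r : ℝ) + r := by exact_mod_cast this
            _ = 2 * r := by ring
        · exact frob_PT_le U V hU hV B
        · exact Real.sqrt_nonneg _
        · exact Real.sqrt_nonneg _
end

section
/- Let ℓ : ℝ^{n₁×n₂} → ℝ be convex and differentiable, let λ* > 0, λ_max ≥ 0, and let A, B be n₁ × n₂ matrices satisfying ℓ(A) + λ*·‖A‖_* + λ_max·‖A‖_max ≤ ℓ(B) + λ*·‖B‖_* + λ_max·‖B‖_max, and suppose λ* ≥ 2·‖∇ℓ(B)‖_op. Then ‖P_B^⊥(A − B)‖_* ≤ 3·‖P_B(A − B)‖_* + 2·(λ_max/λ*)·‖A − B‖_F, where P_B denotes the projection onto the tangent space of the reduced SVD of B and P_B^⊥ its complement. -/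
open Matrix

noncomputable def maxRowNorm {m n : ℕ} (A : Matrix (Fin m) (Fin n) ℝ) : ℝ :=
  ⨆ i, Real.sqrt (∑ j, (A i j) ^ 2)

/-- The spectral (operator) norm: the largest singular value. -/
noncomputable def specNorm {m n : ℕ} (A : Matrix (Fin m) (Fin n) ℝ) : ℝ :=
  ⨆ i, singVals A i

attribute [local instance] Matrix.frobeniusNormedAddCommGroup Matrix.frobeniusNormedSpace

namespace S19

/-- Frobenius inner product. -/
def ip {m n : ℕ} (X Y : Matrix (Fin m) (Fin n) ℝ) : ℝ := ∑ j, ∑ k, X j k * Y j k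

lemma dot_transpose_mulVec {m n : ℕ} (A : Matrix (Fin m) (Fin n) ℝ)
    (x : Fin n → ℝ) (y : Fin m → ℝ) : x ⬝ᵥ (Aᵀ *ᵥ y) = (A *ᵥ x) ⬝ᵥ y := by
  rw [Matrix.dotProduct_mulVec, Matrix.vecMul_transpose, dotProduct_comm]

lemma dot_self_nonneg {n : ℕ} (x : Fin n → ℝ) : 0 ≤ x ⬝ᵥ x :=
  Finset.sum_nonneg fun i _ => mul_self_nonneg _

lemma dot_le_sqrt {n : ℕ} (x y : Fin n → ℝ) :
    x ⬝ᵥ y ≤ Real.sqrt (x ⬝ᵥ x) * Real.sqrt (y ⬝ᵥ y) := by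
  have h := Finset.sum_mul_sq_le_sq_mul_sq Finset.univ x y
  calc x ⬝ᵥ y ≤ |x ⬝ᵥ y| := le_abs_self _
    _ = Real.sqrt ((x ⬝ᵥ y) ^ 2) := (Real.sqrt_sq_eq_abs _).symm
    _ ≤ Real.sqrt ((∑ i, x i ^ 2) * ∑ i, y i ^ 2) := Real.sqrt_le_sqrt h
    _ = Real.sqrt (x ⬝ᵥ x) * Real.sqrt (y ⬝ᵥ y) := by
        rw [Real.sqrt_mul (by positivity)]
        simp [dotProduct, sq]

lemma mul_vecMulVec {n p q : ℕ} (M : Matrix (Fin p) (Fin n) ℝ) (x : Fin n → ℝ) (y : Fin q → ℝ) :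
    M * vecMulVec x y = vecMulVec (M *ᵥ x) y := by
  ext j l
  simp [Matrix.mul_apply, vecMulVec_apply, Matrix.mulVec, dotProduct,
    Finset.sum_mul, mul_assoc]

lemma vecMulVec_mul_vecMulVec {n p q : ℕ} (a : Fin p → ℝ) (b : Fin n → ℝ)
    (c : Fin n → ℝ) (d : Fin q → ℝ) :
    vecMulVec a b * vecMulVec c d = (b ⬝ᵥ c) • vecMulVec a d := by
  ext j l
  simp only [Matrix.mul_apply, vecMulVec_apply, Matrix.smul_apply, smul_eq_mul,
    dotProduct, Finset.sum_mul, Finset.mul_sum]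
  exact Finset.sum_congr rfl fun k _ => by ring

lemma ip_eq_trace {m n : ℕ} (X Y : Matrix (Fin m) (Fin n) ℝ) :
    ip X Y = Matrix.trace (Xᵀ * Y) := by
  simp only [ip, Matrix.trace, Matrix.diag_apply, Matrix.mul_apply, Matrix.transpose_apply]
  rw [Finset.sum_comm]


/-- Diagonal-type matrix in basis `v`. -/
def Dm {n : ℕ} (v : Fin n → Fin n → ℝ) (a : Fin n → ℝ) : Matrix (Fin n) (Fin n) ℝ :=
  ∑ i, a i • vecMulVec (v i) (v i)

lemma Dm_transpose {n : ℕ} (v : Fin n → Fin n → ℝ) (a : Fin n → ℝ) :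
    (Dm v a)ᵀ = Dm v a := by
  unfold Dm
  rw [Matrix.transpose_sum]
  refine Finset.sum_congr rfl fun i _ => ?_
  rw [Matrix.transpose_smul]
  congr 1
  ext k l
  simp [vecMulVec_apply, mul_comm]

lemma Dm_mul {n : ℕ} {v : Fin n → Fin n → ℝ}
    (horth : ∀ i j, v i ⬝ᵥ v j = if i = j then 1 else 0) (a b : Fin n → ℝ) :
    Dm v a * Dm v b = Dm v (fun i => a i * b i) := by
  unfold Dm
  rw [Finset.sum_mul_sum]
  simp only [Matrix.smul_mul, Matrix.mul_smul, vecMulVec_mul_vecMulVec, smul_smul]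
  refine Finset.sum_congr rfl fun i _ => ?_
  rw [Finset.sum_eq_single i (fun j _ hj => by
      rw [horth i j, if_neg (fun h => hj h.symm)]; simp)
    (by simp)]
  rw [horth i i, if_pos rfl]
  rw [mul_comm (b i)]
  simp

lemma trace_Dm {n : ℕ} {v : Fin n → Fin n → ℝ}
    (horth : ∀ i j, v i ⬝ᵥ v j = if i = j then 1 else 0) (a : Fin n → ℝ) :
    Matrix.trace (Dm v a) = ∑ i, a i := by
  unfold Dm
  rw [Matrix.trace_sum]
  refine Finset.sum_congr rfl fun i _ => ?_
  have h := horth i i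
  simp only [if_pos rfl] at h
  rw [Matrix.trace_smul]
  have : Matrix.trace (vecMulVec (v i) (v i)) = v i ⬝ᵥ v i := by
    simp [Matrix.trace, vecMulVec_apply, dotProduct]
  rw [this, h]; simp

lemma Dm_one {n : ℕ} {v : Fin n → Fin n → ℝ}
    (hcomp : ∀ k l, ∑ i, v i k * v i l = if k = l then 1 else 0) :
    Dm v (fun _ => 1) = 1 := by
  ext k l
  simp only [Dm, Finset.sum_apply, Matrix.sum_apply, Matrix.smul_apply, vecMulVec_apply,
    one_smul, Matrix.one_apply]
  rw [hcomp k l]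

lemma mulVec_Dm {n : ℕ} (v : Fin n → Fin n → ℝ) (a : Fin n → ℝ) (x : Fin n → ℝ) :
    Dm v a *ᵥ x = ∑ i, (a i * (v i ⬝ᵥ x)) • v i := by
  unfold Dm
  ext k
  simp only [Matrix.mulVec, dotProduct, Finset.sum_apply, Matrix.sum_apply,
    Matrix.smul_apply, vecMulVec_apply, smul_eq_mul, Pi.smul_apply, Finset.sum_mul,
    Finset.mul_sum]
  rw [Finset.sum_comm]
  exact Finset.sum_congr rfl fun i _ => Finset.sum_congr rfl fun l _ => by ring


lemma eigendata {m n : ℕ} (A : Matrix (Fin m) (Fin n) ℝ) :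
    ∃ (v : Fin n → Fin n → ℝ) (μ : Fin n → ℝ),
      (∀ i j, v i ⬝ᵥ v j = if i = j then 1 else 0) ∧
      (∀ k l, ∑ i, v i k * v i l = if k = l then 1 else 0) ∧
      (∀ i, (Aᵀ * A) *ᵥ v i = μ i • v i) ∧
      (∀ i, singVals A i = Real.sqrt (μ i)) := by
  have hM := Matrix.isHermitian_conjTranspose_mul_self A
  refine ⟨fun i => ⇑(hM.eigenvectorBasis i), hM.eigenvalues, ?_, ?_, ?_, fun i => rfl⟩
  · intro i j
    have := hM.eigenvectorBasis.orthonormal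
    rw [orthonormal_iff_ite] at this
    have h := this i j
    rw [PiLp.inner_apply] at h
    simpa [dotProduct, RCLike.inner_apply, mul_comm] using h
  · intro k l
    have h := hM.eigenvectorBasis.sum_repr' (EuclideanSpace.single l 1)
    have := congrFun (congrArg (fun x : EuclideanSpace ℝ (Fin n) => (x : Fin n → ℝ)) h) k
    simp [PiLp.inner_apply, EuclideanSpace.single_apply] at this
    rw [← this]
    exact Finset.sum_congr rfl fun i _ => mul_comm _ _
  · intro i
    exact hM.mulVec_eigenvectorBasis i

section Derived

variable {m n : ℕ} {A : Matrix (Fin m) (Fin n) ℝ} {v : Fin n → Fin n → ℝ} {μ : Fin n → ℝ}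

lemma dotAv (heig : ∀ i, (Aᵀ * A) *ᵥ v i = μ i • v i)
    (horth : ∀ i j, v i ⬝ᵥ v j = if i = j then 1 else 0) (i j : Fin n) :
    (A *ᵥ v i) ⬝ᵥ (A *ᵥ v j) = if i = j then μ j else 0 := by
  have : (A *ᵥ v i) ⬝ᵥ (A *ᵥ v j) = v i ⬝ᵥ ((Aᵀ * A) *ᵥ v j) := by
    rw [← Matrix.mulVec_mulVec, dot_transpose_mulVec]
  rw [this, heig j, dotProduct_smul, smul_eq_mul, horth i j]
  split <;> ring

lemma mu_nonneg (heig : ∀ i, (Aᵀ * A) *ᵥ v i = μ i • v i)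
    (horth : ∀ i j, v i ⬝ᵥ v j = if i = j then 1 else 0) (i : Fin n) : 0 ≤ μ i := by
  have h := dotAv heig horth i i
  rw [if_pos rfl] at h
  rw [← h]
  exact dot_self_nonneg _

lemma ata_eq_Dm (heig : ∀ i, (Aᵀ * A) *ᵥ v i = μ i • v i)
    (hcomp : ∀ k l, ∑ i, v i k * v i l = if k = l then 1 else 0) :
    Aᵀ * A = Dm v μ := by
  have h1 : Aᵀ * A = (Aᵀ * A) * Dm v (fun _ => 1) := by rw [Dm_one hcomp, Matrix.mul_one]
  rw [h1]
  unfold Dm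
  rw [Finset.mul_sum]
  refine Finset.sum_congr rfl fun i _ => ?_
  rw [Matrix.mul_smul, one_smul, mul_vecMulVec, heig i]
  ext k l
  simp [vecMulVec_apply, Pi.smul_apply, smul_eq_mul, mul_assoc]

/-- Quadratic-form expansion of ‖A *ᵥ x‖². -/
lemma mulVec_dot_self (heig : ∀ i, (Aᵀ * A) *ᵥ v i = μ i • v i)
    (hcomp : ∀ k l, ∑ i, v i k * v i l = if k = l then 1 else 0) (x : Fin n → ℝ) :
    (A *ᵥ x) ⬝ᵥ (A *ᵥ x) = ∑ i, μ i * (v i ⬝ᵥ x) ^ 2 := by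
  have h : (A *ᵥ x) ⬝ᵥ (A *ᵥ x) = x ⬝ᵥ ((Aᵀ * A) *ᵥ x) := by
    rw [← Matrix.mulVec_mulVec, dot_transpose_mulVec]
  rw [h, ata_eq_Dm heig hcomp, mulVec_Dm]
  simp only [dotProduct, Finset.sum_apply, Pi.smul_apply, smul_eq_mul, Finset.mul_sum]
  rw [Finset.sum_comm]
  refine Finset.sum_congr rfl fun i _ => ?_
  have h1 : ∀ k, (∑ l, μ i * (v i l * x l)) * v i k = μ i * (∑ l, v i l * x l) * v i k := by
    intro k; rw [Finset.mul_sum]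
  show ∑ k, x k * ((∑ l, μ i * (v i l * x l)) * v i k) = μ i * (∑ l, v i l * x l) ^ 2
  calc ∑ k, x k * ((∑ l, μ i * (v i l * x l)) * v i k)
      = ∑ k, μ i * (∑ l, v i l * x l) * (x k * v i k) := by
        refine Finset.sum_congr rfl fun k _ => ?_; rw [h1 k]; ring
    _ = μ i * (∑ l, v i l * x l) * ∑ k, x k * v i k := by rw [← Finset.mul_sum]
    _ = μ i * (∑ l, v i l * x l) ^ 2 := by
        rw [show (∑ k, x k * v i k) = ∑ k, v i k * x k from
          Finset.sum_congr rfl fun k _ => mul_comm _ _]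
        ring

lemma parseval (hcomp : ∀ k l, ∑ i, v i k * v i l = if k = l then 1 else 0) (x : Fin n → ℝ) :
    ∑ i, (v i ⬝ᵥ x) ^ 2 = x ⬝ᵥ x := by
  have : ∀ i, (v i ⬝ᵥ x) ^ 2 = ∑ k, ∑ l, (v i k * v i l) * (x k * x l) := by
    intro i
    simp only [dotProduct, sq, Finset.sum_mul, Finset.mul_sum]
    exact Finset.sum_congr rfl fun k _ => Finset.sum_congr rfl fun l _ => by ring
  rw [Finset.sum_congr rfl fun i _ => this i, Finset.sum_comm]
  have : ∀ k, ∑ i, ∑ l, (v i k * v i l) * (x k * x l)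
      = ∑ l, (∑ i, v i k * v i l) * (x k * x l) := by
    intro k
    rw [Finset.sum_comm]
    exact Finset.sum_congr rfl fun l _ => by rw [Finset.sum_mul]
  rw [Finset.sum_congr rfl fun k _ => this k]
  simp only [dotProduct]
  refine Finset.sum_congr rfl fun k _ => ?_
  rw [Finset.sum_congr rfl fun l (_ : l ∈ Finset.univ) => by rw [hcomp k l]]
  simp [ite_mul, sq]

end Derived

lemma nuclearNorm_nonneg {m n : ℕ} (A : Matrix (Fin m) (Fin n) ℝ) : 0 ≤ nuclearNorm A :=
  Finset.sum_nonneg fun i _ => Real.sqrt_nonneg _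

lemma specNorm_nonneg {m n : ℕ} (A : Matrix (Fin m) (Fin n) ℝ) : 0 ≤ specNorm A := by
  rcases isEmpty_or_nonempty (Fin n) with h | h
  · simp [specNorm, Real.iSup_of_isEmpty]
  · exact le_ciSup_of_le (Set.Finite.bddAbove (Set.finite_range _)) (Classical.arbitrary _)
      (Real.sqrt_nonneg _)

lemma singVals_le_specNorm {m n : ℕ} (A : Matrix (Fin m) (Fin n) ℝ) (i : Fin n) :
    singVals A i ≤ specNorm A :=
  le_ciSup (Set.Finite.bddAbove (Set.finite_range _)) i

lemma trace_quadsum {n : ℕ} {v : Fin n → Fin n → ℝ}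
    (hcomp : ∀ k l, ∑ i, v i k * v i l = if k = l then 1 else 0)
    (M : Matrix (Fin n) (Fin n) ℝ) :
    ∑ i, v i ⬝ᵥ (M *ᵥ v i) = Matrix.trace M := by
  have h1 : ∀ i, v i ⬝ᵥ (M *ᵥ v i) = Matrix.trace (M * vecMulVec (v i) (v i)) := by
    intro i
    simp only [Matrix.trace, Matrix.diag_apply, Matrix.mul_apply, vecMulVec_apply,
      dotProduct, Matrix.mulVec, Finset.mul_sum]
    exact Finset.sum_congr rfl fun k _ => Finset.sum_congr rfl fun l _ => by ring
  rw [Finset.sum_congr rfl fun i _ => h1 i, ← Matrix.trace_sum, ← Finset.mul_sum]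
  have h2 : (∑ i, vecMulVec (v i) (v i)) = (1 : Matrix (Fin n) (Fin n) ℝ) := by
    rw [← Dm_one hcomp]
    unfold Dm
    exact Finset.sum_congr rfl fun i _ => (one_smul _ _).symm
  rw [h2, Matrix.mul_one]

/-- Expansion of Frobenius inner product along a complete orthonormal family. -/
lemma ip_expand {m n : ℕ} {v : Fin n → Fin n → ℝ}
    (hcomp : ∀ k l, ∑ i, v i k * v i l = if k = l then 1 else 0)
    (X A : Matrix (Fin m) (Fin n) ℝ) :
    ip X A = ∑ i, (X *ᵥ v i) ⬝ᵥ (A *ᵥ v i) := by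
  rw [ip_eq_trace, ← trace_quadsum hcomp]
  refine Finset.sum_congr rfl fun i _ => ?_
  rw [← Matrix.mulVec_mulVec, dot_transpose_mulVec]

/-- Operator norm bound on the quadratic form. -/
lemma spec_quad {m n : ℕ} (A : Matrix (Fin m) (Fin n) ℝ) (x : Fin n → ℝ) :
    (A *ᵥ x) ⬝ᵥ (A *ᵥ x) ≤ specNorm A ^ 2 * (x ⬝ᵥ x) := by
  obtain ⟨v, μ, horth, hcomp, heig, hsv⟩ := eigendata A
  rw [mulVec_dot_self heig hcomp, ← parseval hcomp x, Finset.mul_sum]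
  refine Finset.sum_le_sum fun i _ => ?_
  have h1 : μ i ≤ specNorm A ^ 2 := by
    have h2 : singVals A i ≤ specNorm A := singVals_le_specNorm A i
    have h3 : μ i = singVals A i ^ 2 := by
      rw [hsv i, Real.sq_sqrt (mu_nonneg heig horth i)]
    rw [h3]
    exact pow_le_pow_left₀ (Real.sqrt_nonneg _) h2 2
  exact mul_le_mul_of_nonneg_right h1 (sq_nonneg _)

/-- The key duality inequality: `⟨X, A⟩ ≤ ‖X‖_op ‖A‖_*`. -/
lemma ip_le {m n : ℕ} (X A : Matrix (Fin m) (Fin n) ℝ) :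
    ip X A ≤ specNorm X * nuclearNorm A := by
  obtain ⟨v, μ, horth, hcomp, heig, hsv⟩ := eigendata A
  rw [ip_expand hcomp]
  have hbound : ∀ i, (X *ᵥ v i) ⬝ᵥ (A *ᵥ v i) ≤ specNorm X * singVals A i := by
    intro i
    refine (dot_le_sqrt _ _).trans ?_
    have h1 : Real.sqrt ((X *ᵥ v i) ⬝ᵥ (X *ᵥ v i)) ≤ specNorm X := by
      have h2 := spec_quad X (v i)
      have h3 : v i ⬝ᵥ v i = 1 := by rw [horth i i, if_pos rfl]
      rw [h3, mul_one] at h2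
      calc Real.sqrt ((X *ᵥ v i) ⬝ᵥ (X *ᵥ v i)) ≤ Real.sqrt (specNorm X ^ 2) :=
            Real.sqrt_le_sqrt h2
        _ = specNorm X := Real.sqrt_sq (specNorm_nonneg X)
    have h4 : Real.sqrt ((A *ᵥ v i) ⬝ᵥ (A *ᵥ v i)) = singVals A i := by
      have := dotAv heig horth i i
      rw [if_pos rfl] at this
      rw [this, hsv i]
    rw [h4]
    exact mul_le_mul_of_nonneg_right h1 (Real.sqrt_nonneg _)
  calc ∑ i, (X *ᵥ v i) ⬝ᵥ (A *ᵥ v i) ≤ ∑ i, specNorm X * singVals A i :=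
        Finset.sum_le_sum fun i _ => hbound i
    _ = specNorm X * nuclearNorm A := by rw [← Finset.mul_sum]; rfl

lemma spec_le_one_of_quad {m n : ℕ} (W : Matrix (Fin m) (Fin n) ℝ)
    (h : ∀ x, (W *ᵥ x) ⬝ᵥ (W *ᵥ x) ≤ x ⬝ᵥ x) : specNorm W ≤ 1 := by
  rcases isEmpty_or_nonempty (Fin n) with he | he
  · simp [specNorm, Real.iSup_of_isEmpty]
  obtain ⟨v, μ, horth, hcomp, heig, hsv⟩ := eigendata W
  refine ciSup_le fun i => ?_
  rw [hsv i]
  have h1 := dotAv heig horth i i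
  rw [if_pos rfl] at h1
  have h2 : μ i ≤ 1 := by
    have h3 := h (v i)
    rw [h1] at h3
    have h4 : v i ⬝ᵥ v i = 1 := by rw [horth i i, if_pos rfl]
    rwa [h4] at h3
  calc Real.sqrt (μ i) ≤ Real.sqrt 1 := Real.sqrt_le_sqrt h2
    _ = 1 := Real.sqrt_one


lemma dot_mulVec_self {m n : ℕ} (A : Matrix (Fin m) (Fin n) ℝ) (x : Fin n → ℝ) :
    (A *ᵥ x) ⬝ᵥ (A *ᵥ x) = x ⬝ᵥ ((Aᵀ * A) *ᵥ x) := by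
  rw [← Matrix.mulVec_mulVec, dot_transpose_mulVec]

lemma quad_le_of_symm_idem {n : ℕ} (P : Matrix (Fin n) (Fin n) ℝ)
    (hs : Pᵀ = P) (hi : P * P = P) (x : Fin n → ℝ) : x ⬝ᵥ (P *ᵥ x) ≤ x ⬝ᵥ x := by
  have ha : x ⬝ᵥ (P *ᵥ x) = (P *ᵥ x) ⬝ᵥ (P *ᵥ x) := by
    calc x ⬝ᵥ (P *ᵥ x) = x ⬝ᵥ ((P * P) *ᵥ x) := by rw [hi]
      _ = x ⬝ᵥ (Pᵀ *ᵥ (P *ᵥ x)) := by rw [← Matrix.mulVec_mulVec, hs]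
      _ = (P *ᵥ x) ⬝ᵥ (P *ᵥ x) := dot_transpose_mulVec _ _ _
  have h0 : 0 ≤ x ⬝ᵥ (P *ᵥ x) := ha ▸ dot_self_nonneg _
  have hCS : x ⬝ᵥ (P *ᵥ x) ≤ Real.sqrt (x ⬝ᵥ x) * Real.sqrt (x ⬝ᵥ (P *ᵥ x)) := by
    calc x ⬝ᵥ (P *ᵥ x) ≤ Real.sqrt (x ⬝ᵥ x) * Real.sqrt ((P *ᵥ x) ⬝ᵥ (P *ᵥ x)) :=
          dot_le_sqrt _ _
      _ = Real.sqrt (x ⬝ᵥ x) * Real.sqrt (x ⬝ᵥ (P *ᵥ x)) := by rw [← ha]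
  nlinarith [Real.sq_sqrt h0, Real.sq_sqrt (dot_self_nonneg x),
    Real.sqrt_nonneg (x ⬝ᵥ x), Real.sqrt_nonneg (x ⬝ᵥ (P *ᵥ x)),
    sq_nonneg (Real.sqrt (x ⬝ᵥ x) - Real.sqrt (x ⬝ᵥ (P *ᵥ x)))]

lemma ip_add_right {m n : ℕ} (X Y Z : Matrix (Fin m) (Fin n) ℝ) :
    ip X (Y + Z) = ip X Y + ip X Z := by
  simp [ip, mul_add, Finset.sum_add_distrib]

/-- The dual-certificate matrix for the nuclear norm. -/
lemma exists_dualizer {m n : ℕ} (A : Matrix (Fin m) (Fin n) ℝ) :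
    ∃ C : Matrix (Fin n) (Fin n) ℝ,
      Cᵀ = C ∧
      Matrix.trace (C * (Aᵀ * A)) = nuclearNorm A ∧
      C * (Aᵀ * A) * C = C * C * (Aᵀ * A) ∧
      C * C * (Aᵀ * A) = (Aᵀ * A) * (C * C) ∧
      (C * C * (Aᵀ * A)) * (C * C * (Aᵀ * A)) = C * C * (Aᵀ * A) ∧
      (C * C * (Aᵀ * A))ᵀ = C * C * (Aᵀ * A) := by
  obtain ⟨v, μ, horth, hcomp, heig, hsv⟩ := eigendata A
  set c : Fin n → ℝ := fun i => if μ i = 0 then 0 else (Real.sqrt (μ i))⁻¹ with hc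
  have hM : Aᵀ * A = Dm v μ := ata_eq_Dm heig hcomp
  have hcmu : ∀ i, c i * μ i = Real.sqrt (μ i) := by
    intro i
    by_cases h : μ i = 0
    · simp [hc, h]
    · have hpos : 0 < μ i := lt_of_le_of_ne (mu_nonneg heig horth i) (Ne.symm h)
      have hs : Real.sqrt (μ i) ≠ 0 := ne_of_gt (Real.sqrt_pos.2 hpos)
      rw [hc]
      simp only [if_neg h]
      rw [← Real.mul_self_sqrt (le_of_lt hpos)]
      field_simp
      rw [Real.sqrt_sq (Real.sqrt_nonneg _)]
  have hccmu : ∀ i, (c i * c i * μ i) = if μ i = 0 then 0 else 1 := by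
    intro i
    by_cases h : μ i = 0
    · simp [hc, h]
    · have hpos : 0 < μ i := lt_of_le_of_ne (mu_nonneg heig horth i) (Ne.symm h)
      have hs : Real.sqrt (μ i) ≠ 0 := ne_of_gt (Real.sqrt_pos.2 hpos)
      rw [hc]
      simp only [if_neg h]
      rw [← Real.mul_self_sqrt (le_of_lt hpos)]
      field_simp
      rw [Real.sqrt_sq (Real.sqrt_nonneg _)]
  have Dm_congr : ∀ (a b : Fin n → ℝ), (∀ i, a i = b i) → Dm v a = Dm v b := by
    intro a b h
    unfold Dm
    exact Finset.sum_congr rfl fun i _ => by rw [h i]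
  refine ⟨Dm v c, Dm_transpose v c, ?_, ?_, ?_, ?_, ?_⟩
  · rw [hM, Dm_mul horth, trace_Dm horth]
    rw [Finset.sum_congr rfl fun i _ => hcmu i]
    unfold nuclearNorm
    exact Finset.sum_congr rfl fun i _ => (hsv i).symm
  · simp only [hM, Dm_mul horth]
    exact Dm_congr _ _ fun i => by ring
  · simp only [hM, Dm_mul horth]
    exact Dm_congr _ _ fun i => by ring
  · simp only [hM, Dm_mul horth]
    refine Dm_congr _ _ fun i => ?_
    have h := hccmu i
    by_cases hμ : μ i = 0
    · simp [hμ]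
    · rw [if_neg hμ] at h
      rw [h]; ring
  · simp only [hM, Dm_mul horth]
    exact Dm_transpose v _


lemma ip_add_left {m n : ℕ} (X Y Z : Matrix (Fin m) (Fin n) ℝ) :
    ip (X + Y) Z = ip X Z + ip Y Z := by
  simp [ip, add_mul, Finset.sum_add_distrib]

lemma ip_mulC {m n : ℕ} (A : Matrix (Fin m) (Fin n) ℝ) (C : Matrix (Fin n) (Fin n) ℝ)
    (Y : Matrix (Fin m) (Fin n) ℝ) : ip (A * C) Y = Matrix.trace (Cᵀ * (Aᵀ * Y)) := by
  rw [ip_eq_trace, Matrix.transpose_mul, Matrix.mul_assoc]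

lemma nuclearNorm_triangle {m n : ℕ} (X Y : Matrix (Fin m) (Fin n) ℝ) :
    nuclearNorm (X + Y) ≤ nuclearNorm X + nuclearNorm Y := by
  obtain ⟨C, hCt, htr, hP1, hP2, hidem, hsymm⟩ := exists_dualizer (X + Y)
  set W := (X + Y) * C with hW
  have hipA : ip W (X + Y) = nuclearNorm (X + Y) := by
    rw [hW, ip_mulC, hCt]
    exact htr
  have hWtW : Wᵀ * W = C * C * ((X + Y)ᵀ * (X + Y)) := by
    have h : Wᵀ * W = C * ((X + Y)ᵀ * (X + Y)) * C := by
      rw [hW, Matrix.transpose_mul, hCt]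
      simp only [Matrix.mul_assoc]
    rw [h, hP1]
  have hspec : specNorm W ≤ 1 := by
    apply spec_le_one_of_quad
    intro x
    rw [dot_mulVec_self, hWtW]
    exact quad_le_of_symm_idem _ hsymm hidem x
  calc nuclearNorm (X + Y) = ip W X + ip W Y := by rw [← ip_add_right, hipA]
    _ ≤ specNorm W * nuclearNorm X + specNorm W * nuclearNorm Y :=
        add_le_add (ip_le _ _) (ip_le _ _)
    _ ≤ 1 * nuclearNorm X + 1 * nuclearNorm Y :=
        add_le_add (mul_le_mul_of_nonneg_right hspec (nuclearNorm_nonneg _))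
          (mul_le_mul_of_nonneg_right hspec (nuclearNorm_nonneg _))
    _ = nuclearNorm X + nuclearNorm Y := by ring

lemma mulmul_zero {m n p : ℕ} {X : Matrix (Fin m) (Fin n) ℝ} {Y : Matrix (Fin m) (Fin p) ℝ}
    (h : Xᵀ * Y = 0) (C : Matrix (Fin p) (Fin p) ℝ) (D : Matrix (Fin n) (Fin n) ℝ) :
    (Xᵀ * X * D)ᵀ * 0 = 0 := by simp

lemma nuclearNorm_add_of_orth {m n : ℕ} (X Y : Matrix (Fin m) (Fin n) ℝ)
    (h1 : Xᵀ * Y = 0) (h2 : X * Yᵀ = 0) :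
    nuclearNorm X + nuclearNorm Y ≤ nuclearNorm (X + Y) := by
  obtain ⟨Cx, hXt, htrX, hPX1, hPX2, hXidem, hXsymm⟩ := exists_dualizer X
  obtain ⟨Cy, hYt, htrY, hPY1, hPY2, hYidem, hYsymm⟩ := exists_dualizer Y
  have h1' : Yᵀ * X = 0 := by
    have := congrArg Matrix.transpose h1
    simpa [Matrix.transpose_mul] using this
  have h2' : Y * Xᵀ = 0 := by
    have := congrArg Matrix.transpose h2
    simpa [Matrix.transpose_mul] using this
  set W := X * Cx + Y * Cy with hW
  have hipX : ip (X * Cx) X = nuclearNorm X := by rw [ip_mulC, hXt]; exact htrX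
  have hipY : ip (Y * Cy) Y = nuclearNorm Y := by rw [ip_mulC, hYt]; exact htrY
  have hipXY : ip (X * Cx) Y = 0 := by rw [ip_mulC, h1]; simp
  have hipYX : ip (Y * Cy) X = 0 := by rw [ip_mulC, h1']; simp
  have hipA : ip W (X + Y) = nuclearNorm X + nuclearNorm Y := by
    rw [hW, ip_add_left, ip_add_right, ip_add_right, hipX, hipY, hipXY, hipYX]
    ring
  set P := Cx * Cx * (Xᵀ * X) + Cy * Cy * (Yᵀ * Y) with hP
  have hWtW : Wᵀ * W = P := by
    rw [hW, Matrix.transpose_add, Matrix.add_mul, Matrix.mul_add, Matrix.mul_add]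
    have t11 : (X * Cx)ᵀ * (X * Cx) = Cx * Cx * (Xᵀ * X) := by
      rw [← hPX1, Matrix.transpose_mul, hXt]
      simp only [Matrix.mul_assoc]
    have t22 : (Y * Cy)ᵀ * (Y * Cy) = Cy * Cy * (Yᵀ * Y) := by
      rw [← hPY1, Matrix.transpose_mul, hYt]
      simp only [Matrix.mul_assoc]
    have t12 : (X * Cx)ᵀ * (Y * Cy) = 0 := by
      rw [Matrix.transpose_mul]
      calc Cxᵀ * Xᵀ * (Y * Cy) = Cxᵀ * ((Xᵀ * Y) * Cy) := by simp only [Matrix.mul_assoc]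
        _ = 0 := by rw [h1]; simp
    have t21 : (Y * Cy)ᵀ * (X * Cx) = 0 := by
      rw [Matrix.transpose_mul]
      calc Cyᵀ * Yᵀ * (X * Cx) = Cyᵀ * ((Yᵀ * X) * Cx) := by simp only [Matrix.mul_assoc]
        _ = 0 := by rw [h1']; simp
    rw [t11, t22, t12, t21, hP]
    simp
  have hPsymm : Pᵀ = P := by rw [hP, Matrix.transpose_add, hXsymm, hYsymm]
  have hXXYY : (Xᵀ * X) * (Yᵀ * Y) = 0 := by
    calc (Xᵀ * X) * (Yᵀ * Y) = Xᵀ * ((X * Yᵀ) * Y) := by simp only [Matrix.mul_assoc]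
      _ = 0 := by rw [h2]; simp
  have hYYXX : (Yᵀ * Y) * (Xᵀ * X) = 0 := by
    calc (Yᵀ * Y) * (Xᵀ * X) = Yᵀ * ((Y * Xᵀ) * X) := by simp only [Matrix.mul_assoc]
      _ = 0 := by rw [h2']; simp
  have hPidem : P * P = P := by
    rw [hP, Matrix.add_mul, Matrix.mul_add, Matrix.mul_add]
    have c12 : Cx * Cx * (Xᵀ * X) * (Cy * Cy * (Yᵀ * Y)) = 0 := by
      rw [hPY2]
      calc Cx * Cx * (Xᵀ * X) * ((Yᵀ * Y) * (Cy * Cy))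
          = Cx * Cx * ((Xᵀ * X) * (Yᵀ * Y)) * (Cy * Cy) := by simp only [Matrix.mul_assoc]
        _ = 0 := by rw [hXXYY]; simp
    have c21 : Cy * Cy * (Yᵀ * Y) * (Cx * Cx * (Xᵀ * X)) = 0 := by
      rw [hPX2]
      calc Cy * Cy * (Yᵀ * Y) * ((Xᵀ * X) * (Cx * Cx))
          = Cy * Cy * ((Yᵀ * Y) * (Xᵀ * X)) * (Cx * Cx) := by simp only [Matrix.mul_assoc]
        _ = 0 := by rw [hYYXX]; simp
    rw [hXidem, hYidem, c12, c21]
    simp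
  have hspec : specNorm W ≤ 1 := by
    apply spec_le_one_of_quad
    intro x
    rw [dot_mulVec_self, hWtW]
    exact quad_le_of_symm_idem _ hPsymm hPidem x
  calc nuclearNorm X + nuclearNorm Y = ip W (X + Y) := hipA.symm
    _ ≤ specNorm W * nuclearNorm (X + Y) := ip_le _ _
    _ ≤ 1 * nuclearNorm (X + Y) :=
        mul_le_mul_of_nonneg_right hspec (nuclearNorm_nonneg _)
    _ = nuclearNorm (X + Y) := one_mul _


lemma nuclearNorm_congr {m m' n : ℕ} (A : Matrix (Fin m) (Fin n) ℝ)
    (B : Matrix (Fin m') (Fin n) ℝ) (h : Aᴴ * A = Bᴴ * B) :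
    nuclearNorm A = nuclearNorm B := by
  unfold nuclearNorm singVals
  refine Finset.sum_congr rfl fun i _ => ?_
  congr 1
  have key : ∀ (M N : Matrix (Fin n) (Fin n) ℝ) (hM : M.IsHermitian) (hN : N.IsHermitian),
      M = N → hM.eigenvalues = hN.eigenvalues := by
    rintro M N hM hN rfl; rfl
  exact congrFun (key _ _ _ _ h) i

lemma nuclearNorm_neg {m n : ℕ} (M : Matrix (Fin m) (Fin n) ℝ) :
    nuclearNorm (-M) = nuclearNorm M :=
  nuclearNorm_congr _ _ (by simp)

lemma ip_neg_right {m n : ℕ} (X Y : Matrix (Fin m) (Fin n) ℝ) :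
    ip X (-Y) = -ip X Y := by
  simp [ip, Finset.sum_neg_distrib]

lemma sqrt_sum_sq_add_le {n : ℕ} (f g : Fin n → ℝ) :
    Real.sqrt (∑ j, (f j + g j) ^ 2) ≤
      Real.sqrt (∑ j, f j ^ 2) + Real.sqrt (∑ j, g j ^ 2) := by
  have hdf : (∑ j, f j ^ 2) = f ⬝ᵥ f := by simp [dotProduct, sq]
  have hdg : (∑ j, g j ^ 2) = g ⬝ᵥ g := by simp [dotProduct, sq]
  have hcs := dot_le_sqrt f g
  have hexp : (∑ j, (f j + g j) ^ 2) = f ⬝ᵥ f + 2 * (f ⬝ᵥ g) + g ⬝ᵥ g := by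
    simp only [dotProduct, Finset.mul_sum, ← Finset.sum_add_distrib]
    exact Finset.sum_congr rfl fun j _ => by ring
  have hle : (∑ j, (f j + g j) ^ 2) ≤
      (Real.sqrt (f ⬝ᵥ f) + Real.sqrt (g ⬝ᵥ g)) ^ 2 := by
    rw [hexp]
    nlinarith [Real.sq_sqrt (dot_self_nonneg f), Real.sq_sqrt (dot_self_nonneg g), hcs]
  calc Real.sqrt (∑ j, (f j + g j) ^ 2)
      ≤ Real.sqrt ((Real.sqrt (f ⬝ᵥ f) + Real.sqrt (g ⬝ᵥ g)) ^ 2) := Real.sqrt_le_sqrt hle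
    _ = Real.sqrt (f ⬝ᵥ f) + Real.sqrt (g ⬝ᵥ g) :=
        Real.sqrt_sq (by positivity)
    _ = Real.sqrt (∑ j, f j ^ 2) + Real.sqrt (∑ j, g j ^ 2) := by rw [hdf, hdg]

lemma maxRowNorm_sub_le {m n : ℕ} (A B : Matrix (Fin m) (Fin n) ℝ) :
    maxRowNorm B - maxRowNorm A ≤ frobNorm (A - B) := by
  have hfrob_nonneg : 0 ≤ frobNorm (A - B) := Real.sqrt_nonneg _
  rcases isEmpty_or_nonempty (Fin m) with he | he
  · unfold maxRowNorm
    rw [Real.iSup_of_isEmpty, Real.iSup_of_isEmpty]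
    linarith
  have hrow_le_frob : ∀ i, Real.sqrt (∑ j, (B i j - A i j) ^ 2) ≤ frobNorm (A - B) := by
    intro i
    unfold frobNorm
    apply Real.sqrt_le_sqrt
    calc (∑ j, (B i j - A i j) ^ 2) = ∑ j, ((A - B) i j) ^ 2 := by
          refine Finset.sum_congr rfl fun j _ => ?_
          simp [Matrix.sub_apply]
          ring
      _ ≤ ∑ i', ∑ j, ((A - B) i' j) ^ 2 :=
          Finset.single_le_sum (f := fun i' => ∑ j, ((A - B) i' j) ^ 2)
            (fun i' _ => Finset.sum_nonneg fun j _ => sq_nonneg _) (Finset.mem_univ i)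
  have hmain : maxRowNorm B ≤ maxRowNorm A + frobNorm (A - B) := by
    refine ciSup_le fun i => ?_
    have hsplit : Real.sqrt (∑ j, (B i j) ^ 2) ≤
        Real.sqrt (∑ j, (A i j) ^ 2) + Real.sqrt (∑ j, (B i j - A i j) ^ 2) := by
      have := sqrt_sum_sq_add_le (fun j => A i j) (fun j => B i j - A i j)
      simpa using this
    have hA_le : Real.sqrt (∑ j, (A i j) ^ 2) ≤ maxRowNorm A := by
      exact le_ciSup (f := fun i' => Real.sqrt (∑ j, (A i' j) ^ 2))
        (Set.Finite.bddAbove (Set.finite_range _)) i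
    calc Real.sqrt (∑ j, (B i j) ^ 2)
        ≤ Real.sqrt (∑ j, (A i j) ^ 2) + Real.sqrt (∑ j, (B i j - A i j) ^ 2) := hsplit
      _ ≤ maxRowNorm A + frobNorm (A - B) := add_le_add hA_le (hrow_le_frob i)
  linarith


lemma grad_ineq {n₁ n₂ : ℕ} (ℓ : Matrix (Fin n₁) (Fin n₂) ℝ → ℝ)
    (hconv : ConvexOn ℝ Set.univ ℓ) (hdiff : Differentiable ℝ ℓ)
    (A B : Matrix (Fin n₁) (Fin n₂) ℝ) :
    fderiv ℝ ℓ B (A - B) ≤ ℓ A - ℓ B := by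
  set c : ℝ → Matrix (Fin n₁) (Fin n₂) ℝ := fun t => t • (A - B) + B with hc
  have hc0 : c 0 = B := by simp [hc]
  have hc1 : c 1 = A := by simp [hc]
  have hg : ConvexOn ℝ Set.univ (ℓ ∘ c) := by
    have haff : ConvexOn ℝ ((AffineMap.lineMap B A : ℝ →ᵃ[ℝ] _) ⁻¹' Set.univ)
        (ℓ ∘ (AffineMap.lineMap B A : ℝ →ᵃ[ℝ] _)) :=
      hconv.comp_affineMap _
    have heq : (ℓ ∘ c) = ℓ ∘ (AffineMap.lineMap B A : ℝ →ᵃ[ℝ] _) := by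
      funext t
      simp [hc, AffineMap.lineMap_apply]
    rw [heq]
    simpa using haff
  have hder : HasDerivAt (ℓ ∘ c) (fderiv ℝ ℓ B (A - B)) 0 := by
    have h1 : HasDerivAt c (A - B) 0 := by
      have h2 : HasDerivAt (fun t : ℝ => t • (A - B)) ((1 : ℝ) • (A - B)) 0 :=
        (hasDerivAt_id 0).smul_const (A - B)
      simp only [one_smul] at h2
      exact h2.add_const B
    have h3 : HasFDerivAt ℓ (fderiv ℝ ℓ B) (c 0) := by
      rw [hc0]; exact (hdiff B).hasFDerivAt
    exact h3.comp_hasDerivAt 0 h1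
  have hslope := hg.le_slope_of_hasDerivAt (Set.mem_univ (0 : ℝ)) (Set.mem_univ (1 : ℝ))
    one_pos hder
  rw [slope_def_field] at hslope
  simp only [Function.comp_apply, hc0, hc1] at hslope
  simpa using hslope

lemma PT_compl {n₁ n₂ r : ℕ} (U : Matrix (Fin n₁) (Fin r) ℝ) (V : Matrix (Fin n₂) (Fin r) ℝ)
    (Δ : Matrix (Fin n₁) (Fin n₂) ℝ) :
    Δ - PT U V Δ = (1 - U * Uᵀ) * Δ * (1 - V * Vᵀ) := by
  simp only [PT, Matrix.sub_mul, Matrix.mul_sub, Matrix.one_mul, Matrix.mul_one]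
  abel

end S19

open S19

/-- Cone-type inequality for the regularized problem: if `A` improves the
penalized objective over `B` and `λ* ≥ 2‖∇ℓ(B)‖_op`, then
`‖P_B^⊥(A−B)‖_* ≤ 3‖P_B(A−B)‖_* + 2(λmax/λ*)‖A−B‖_F`. -/
theorem stmt19 {n₁ n₂ r : ℕ}
    (ℓ : Matrix (Fin n₁) (Fin n₂) ℝ → ℝ)
    (hconv : ConvexOn ℝ Set.univ ℓ) (hdiff : Differentiable ℝ ℓ)
    (A B : Matrix (Fin n₁) (Fin n₂) ℝ)
    (G : Matrix (Fin n₁) (Fin n₂) ℝ)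
    (hG : ∀ M, fderiv ℝ ℓ B M = ∑ i, ∑ j, G i j * M i j)
    (lamS lamM : ℝ) (hlamS : 0 < lamS) (hlamM : 0 ≤ lamM)
    (U : Matrix (Fin n₁) (Fin r) ℝ) (V : Matrix (Fin n₂) (Fin r) ℝ)
    (σ : Fin r → ℝ) (hσ : ∀ i, 0 < σ i)
    (hU : Uᵀ * U = 1) (hV : Vᵀ * V = 1)
    (hB : B = U * Matrix.diagonal σ * Vᵀ)
    (hobj : ℓ A + lamS * nuclearNorm A + lamM * maxRowNorm A ≤
      ℓ B + lamS * nuclearNorm B + lamM * maxRowNorm B)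
    (hgap : 2 * specNorm G ≤ lamS) :
    nuclearNorm ((A - B) - PT U V (A - B)) ≤
      3 * nuclearNorm (PT U V (A - B)) + 2 * (lamM / lamS) * frobNorm (A - B) := by
  set Δ := A - B with hΔ
  set PTm := PT U V Δ with hPTm
  set Pp := Δ - PTm with hPpdef
  set Nt := nuclearNorm PTm with hNt
  set Np := nuclearNorm Pp with hNp
  set F := frobNorm Δ with hF
  have hPp : Pp = (1 - U * Uᵀ) * Δ * (1 - V * Vᵀ) := PT_compl U V Δ
  -- orthogonality
  have hBU : Bᵀ * (U * Uᵀ) = Bᵀ := by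
    rw [hB]
    have h4 : Uᵀ * (U * Uᵀ) = Uᵀ := by rw [← Matrix.mul_assoc, hU, Matrix.one_mul]
    simp only [Matrix.transpose_mul, Matrix.transpose_transpose, Matrix.mul_assoc, h4]
  have hBV : B * (V * Vᵀ) = B := by
    rw [hB]
    have h4 : Vᵀ * (V * Vᵀ) = Vᵀ := by rw [← Matrix.mul_assoc, hV, Matrix.one_mul]
    simp only [Matrix.mul_assoc, h4]
  have orth1 : Bᵀ * Pp = 0 := by
    have hz : Bᵀ * (1 - U * Uᵀ) = 0 := by
      rw [Matrix.mul_sub, Matrix.mul_one, hBU, sub_self]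
    rw [hPp, Matrix.mul_assoc, ← Matrix.mul_assoc, hz, Matrix.zero_mul]
  have orth2 : B * Ppᵀ = 0 := by
    have hz : B * (1 - V * Vᵀ) = 0 := by
      rw [Matrix.mul_sub, Matrix.mul_one, hBV, sub_self]
    have htp : Ppᵀ = (1 - V * Vᵀ) * (Δᵀ * (1 - U * Uᵀ)) := by
      rw [hPp]
      simp only [Matrix.transpose_mul, Matrix.transpose_sub, Matrix.transpose_one,
        Matrix.transpose_transpose, Matrix.mul_assoc]
    rw [htp, ← Matrix.mul_assoc, hz, Matrix.zero_mul]
  -- decomposability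
  have hadd : nuclearNorm B + Np ≤ nuclearNorm (B + Pp) :=
    nuclearNorm_add_of_orth B Pp orth1 orth2
  have hBPp : B + Pp = A + -PTm := by rw [hPpdef, hΔ]; abel
  have htri2 : nuclearNorm (B + Pp) ≤ nuclearNorm A + Nt := by
    rw [hBPp]
    calc nuclearNorm (A + -PTm) ≤ nuclearNorm A + nuclearNorm (-PTm) :=
          nuclearNorm_triangle _ _
      _ = nuclearNorm A + Nt := by rw [nuclearNorm_neg]
  have hdecomp : nuclearNorm B - nuclearNorm A ≤ Nt - Np := by linarith
  -- gradient + duality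
  have hGd : ip G Δ ≤ ℓ A - ℓ B := by
    have h := grad_ineq ℓ hconv hdiff A B
    rw [hG] at h
    exact h
  have hdual : -(ip G Δ) ≤ specNorm G * nuclearNorm Δ := by
    rw [← ip_neg_right]
    calc ip G (-Δ) ≤ specNorm G * nuclearNorm (-Δ) := ip_le _ _
      _ = specNorm G * nuclearNorm Δ := by rw [nuclearNorm_neg]
  have htriD : nuclearNorm Δ ≤ Nt + Np := by
    have h : Δ = PTm + Pp := by rw [hPpdef]; abel
    calc nuclearNorm Δ = nuclearNorm (PTm + Pp) := by rw [← h]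
      _ ≤ Nt + Np := nuclearNorm_triangle _ _
  have hmax : maxRowNorm B - maxRowNorm A ≤ F := maxRowNorm_sub_le A B
  -- numerics
  have hNt0 : 0 ≤ Nt := nuclearNorm_nonneg _
  have hNp0 : 0 ≤ Np := nuclearNorm_nonneg _
  have hF0 : 0 ≤ F := Real.sqrt_nonneg _
  have hsG : 0 ≤ specNorm G := specNorm_nonneg G
  have e1 : lamS * (nuclearNorm B - nuclearNorm A) ≤ lamS * (Nt - Np) :=
    mul_le_mul_of_nonneg_left hdecomp hlamS.le
  have e2 : lamM * (maxRowNorm B - maxRowNorm A) ≤ lamM * F :=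
    mul_le_mul_of_nonneg_left hmax hlamM
  have e3 : specNorm G * nuclearNorm Δ ≤ (lamS / 2) * (Nt + Np) :=
    mul_le_mul (by linarith) htriD (nuclearNorm_nonneg _) (by linarith)
  have hobj' : ℓ A - ℓ B ≤ lamS * (nuclearNorm B - nuclearNorm A)
      + lamM * (maxRowNorm B - maxRowNorm A) := by linarith [hobj]
  have key : lamS * Np ≤ lamS * (3 * Nt + 2 * (lamM / lamS) * F) := by
    have hexp : lamS * (3 * Nt + 2 * (lamM / lamS) * F) = 3 * (lamS * Nt) + 2 * (lamM * F) := by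
      field_simp
    rw [hexp]
    linarith [e1, e2, e3, hGd, hdual, hobj']
  exact le_of_mul_le_mul_left key hlamS
end
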